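/- Let n, m, l, t ∈ ℤ with m ≠ 0, n² + m² = l², l ≥ 0, and n + l = t². Then there exists k ∈ ℤ such that m = kt and (t + ik)² = 2(n + im) in ℤ[i]; in particular the Gaussian integer 2(n + im) has a square root in ℤ[i]. -/
import Mathlib


/-- square radical of a Gaussian integer coming from a
Pythagorean triple.  If `n² + m² = l²` with `m ≠ 0`, `l ≥ 0` and
`n + l = t²`, then there is `k ∈ ℤ` with `m = k·t` and
`(t + ik)² = 2(n + im)` in `ℤ[i]`; in particular `2(n + im)` has a
square root in `ℤ[i]`. -/
theorem square_radical_of_pythagorean (n m l t : ℤ) (hm : m ≠ 0)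
    (hpyth : n ^ 2 + m ^ 2 = l ^ 2) (hl : 0 ≤ l) (ht : n + l = t ^ 2) :
    (∃ k : ℤ, m = k * t ∧ (⟨t, k⟩ : GaussianInt) ^ 2 = 2 * ⟨n, m⟩) ∧
    ∃ z : GaussianInt, z ^ 2 = 2 * ⟨n, m⟩ := by
  have htne : t ≠ 0 := by
    rintro rfl
    have hn : n = -l := by nlinarith
    have : m ^ 2 = 0 := by nlinarith
    exact hm (by nlinarith)
  have hmsq : m ^ 2 = (l - n) * t ^ 2 := by nlinarith
  have hdvd2 : t ^ 2 ∣ m ^ 2 := ⟨l - n, by linarith [hmsq]⟩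
  have hdvd : t ∣ m := (Int.pow_dvd_pow_iff (two_ne_zero)).mp hdvd2
  obtain ⟨k, hk⟩ := hdvd
  have hk' : m = k * t := by rw [hk]; ring
  have hksq : k ^ 2 = l - n := by
    have h2 : k ^ 2 * t ^ 2 = (l - n) * t ^ 2 := by rw [← hmsq, hk]; ring
    exact mul_right_cancel₀ (pow_ne_zero 2 htne) h2
  have hre : t * t - k * k = 2 * n := by nlinarith
  have him : t * k + k * t = 2 * m := by nlinarith
  have hsq : (⟨t, k⟩ : GaussianInt) ^ 2 = 2 * ⟨n, m⟩ := by
    ext <;> simp [pow_two, Zsqrtd.re_mul, Zsqrtd.im_mul, Zsqrtd.ext_iff] <;> linarith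
  exact ⟨⟨k, hk', hsq⟩, ⟨⟨t, k⟩, hsq⟩⟩
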